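/- For d ≥ 1 and any N > d − 1, there exists C > 0 such that for all r > 0 and all η with |η| = r, ∫_{S_r^{d-1}} ⟨η − ξ⟩^{-N} dσ(ξ) ≤ C, where S_r^{d-1} is the sphere of radius r in ℝ^d with surface measure dσ and ⟨ζ⟩ = (1+|ζ|^2)^{1/2}. -/

import Mathlib

open MeasureTheory Metric Set
open scoped NNReal ENNReal Pointwise

private lemma sqrt_diff_le' {a b : ℝ} (ha : 1/4 ≤ a) (hb : 1/4 ≤ b) :
    |Real.sqrt a - Real.sqrt b| ≤ |a - b| := by
  have ha0 : (0:ℝ) ≤ a := by linarith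
  have hb0 : (0:ℝ) ≤ b := by linarith
  have h1 : Real.sqrt a * Real.sqrt a = a := Real.mul_self_sqrt ha0
  have h2 : Real.sqrt b * Real.sqrt b = b := Real.mul_self_sqrt hb0
  have ha2 : (1/2 : ℝ) ≤ Real.sqrt a := by
    nlinarith [Real.sqrt_nonneg a]
  have hb2 : (1/2 : ℝ) ≤ Real.sqrt b := by
    nlinarith [Real.sqrt_nonneg b]
  have key : (Real.sqrt a - Real.sqrt b) * (Real.sqrt a + Real.sqrt b) = a - b := by
    nlinarith
  have habs : |Real.sqrt a - Real.sqrt b| * (Real.sqrt a + Real.sqrt b) = |a - b| := by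
    rw [← abs_of_nonneg (show (0:ℝ) ≤ Real.sqrt a + Real.sqrt b by linarith), ← abs_mul, key]
  nlinarith [abs_nonneg (Real.sqrt a - Real.sqrt b)]

private lemma g_lip {d : ℕ} (x : EuclideanSpace ℝ (Fin d)) (hx : ‖x‖ = 1) :
    LipschitzOnWith 3 (fun ζ => ζ + Real.sqrt (1 - ‖ζ‖^2) • x)
      (closedBall (0 : EuclideanSpace ℝ (Fin d)) (Real.sqrt 3 / 2)) := by
  have hs3 : Real.sqrt 3 * Real.sqrt 3 = 3 := Real.mul_self_sqrt (by norm_num)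
  apply LipschitzOnWith.of_dist_le_mul
  intro ζ₁ h₁ ζ₂ h₂
  have hn1 : ‖ζ₁‖ ≤ Real.sqrt 3 / 2 := by simpa [dist_zero_right] using h₁
  have hn2 : ‖ζ₂‖ ≤ Real.sqrt 3 / 2 := by simpa [dist_zero_right] using h₂
  have hq1 : ‖ζ₁‖^2 ≤ 3/4 := by nlinarith [norm_nonneg ζ₁]
  have hq2 : ‖ζ₂‖^2 ≤ 3/4 := by nlinarith [norm_nonneg ζ₂]
  have hkey : |Real.sqrt (1 - ‖ζ₁‖^2) - Real.sqrt (1 - ‖ζ₂‖^2)| ≤ 2 * ‖ζ₁ - ζ₂‖ := by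
    have h5 := sqrt_diff_le' (a := 1 - ‖ζ₁‖^2) (b := 1 - ‖ζ₂‖^2) (by linarith) (by linarith)
    have h6 : |(1 - ‖ζ₁‖^2) - (1 - ‖ζ₂‖^2)| ≤ 2 * ‖ζ₁ - ζ₂‖ := by
      have h7 : |‖ζ₁‖ - ‖ζ₂‖| ≤ ‖ζ₁ - ζ₂‖ := abs_norm_sub_norm_le ζ₁ ζ₂
      have h8 : (1 - ‖ζ₁‖^2) - (1 - ‖ζ₂‖^2) = -((‖ζ₁‖ - ‖ζ₂‖) * (‖ζ₁‖ + ‖ζ₂‖)) := by ring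
      rw [h8, abs_neg, abs_mul, abs_of_nonneg (by positivity : (0:ℝ) ≤ ‖ζ₁‖ + ‖ζ₂‖)]
      have h9 : ‖ζ₁‖ + ‖ζ₂‖ ≤ 2 := by nlinarith
      nlinarith [abs_nonneg (‖ζ₁‖ - ‖ζ₂‖), norm_nonneg (ζ₁ - ζ₂)]
    linarith
  have hrw : (ζ₁ + Real.sqrt (1 - ‖ζ₁‖^2) • x) - (ζ₂ + Real.sqrt (1 - ‖ζ₂‖^2) • x)
      = (ζ₁ - ζ₂) + (Real.sqrt (1 - ‖ζ₁‖^2) - Real.sqrt (1 - ‖ζ₂‖^2)) • x := by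
    rw [sub_smul]; abel
  rw [dist_eq_norm, dist_eq_norm]
  calc ‖(ζ₁ + Real.sqrt (1 - ‖ζ₁‖^2) • x) - (ζ₂ + Real.sqrt (1 - ‖ζ₂‖^2) • x)‖
      = ‖(ζ₁ - ζ₂) + (Real.sqrt (1 - ‖ζ₁‖^2) - Real.sqrt (1 - ‖ζ₂‖^2)) • x‖ := by rw [hrw]
    _ ≤ ‖ζ₁ - ζ₂‖ + ‖(Real.sqrt (1 - ‖ζ₁‖^2) - Real.sqrt (1 - ‖ζ₂‖^2)) • x‖ := norm_add_le _ _
    _ = ‖ζ₁ - ζ₂‖ + |Real.sqrt (1 - ‖ζ₁‖^2) - Real.sqrt (1 - ‖ζ₂‖^2)| := by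
        rw [norm_smul, hx, Real.norm_eq_abs, mul_one]
    _ ≤ ‖ζ₁ - ζ₂‖ + 2 * ‖ζ₁ - ζ₂‖ := by linarith
    _ = (3:ℝ≥0) * ‖ζ₁ - ζ₂‖ := by push_cast; ring

private lemma unitCap {d : ℕ} (hd : 1 ≤ d) :
    ∃ K : ℝ≥0∞, K ≠ ⊤ ∧ ∀ (x : EuclideanSpace ℝ (Fin d)), ‖x‖ = 1 →
      ∀ s : ℝ, 0 < s → s ≤ 1 →
      μH[((d - 1 : ℕ) : ℝ)] (sphere (0 : EuclideanSpace ℝ (Fin d)) 1 ∩ closedBall x s)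
        ≤ K * ENNReal.ofReal s ^ (d - 1 : ℕ) := by
  classical
  set m := d - 1 with hm
  set E := EuclideanSpace ℝ (Fin d)
  haveI : Fact (Module.finrank ℝ E = m + 1) :=
    ⟨by simp only [E, finrank_euclideanSpace_fin]; omega⟩
  set cst : ℝ≥0 := (Fintype.card (Fin m) : ℝ≥0) ^ ((1 / (2:ℝ≥0∞))).toReal with hcst
  refine ⟨(3:ℝ≥0∞) ^ (m:ℝ) * (cst : ℝ≥0∞) ^ (m:ℝ) * ENNReal.ofReal (2 ^ m), ?_, ?_⟩
  · exact ENNReal.mul_ne_top (ENNReal.mul_ne_top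
      (ENNReal.rpow_ne_top_of_nonneg (Nat.cast_nonneg m) (by norm_num))
      (ENNReal.rpow_ne_top_of_nonneg (Nat.cast_nonneg m) ENNReal.coe_ne_top))
      ENNReal.ofReal_ne_top
  intro x hx s hs hs1
  have hx0 : x ≠ 0 := by intro h; rw [h, norm_zero] at hx; norm_num at hx
  set s' : ℝ := min s (Real.sqrt 3 / 2) with hs'
  have hs3 : Real.sqrt 3 * Real.sqrt 3 = 3 := Real.mul_self_sqrt (by norm_num)
  have hsqrt3pos : 0 < Real.sqrt 3 := Real.sqrt_pos.2 (by norm_num)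
  have hs'0 : 0 ≤ s' := le_min hs.le (by positivity)
  set T : Set E := closedBall 0 s' ∩ ((ℝ ∙ x)ᗮ : Set E) with hT
  -- Cap ⊆ g '' T
  have hCap : sphere (0:E) 1 ∩ closedBall x s ⊆
      (fun ζ => ζ + Real.sqrt (1 - ‖ζ‖^2) • x) '' T := by
    rintro ξ ⟨hξ1, hξ2⟩
    have hξn : ‖ξ‖ = 1 := by simpa [dist_zero_right] using hξ1
    have hξx : ‖ξ - x‖ ≤ s := by rw [mem_closedBall, dist_eq_norm] at hξ2; exact hξ2
    set c : ℝ := inner ℝ x ξ with hc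
    have hinner : (inner ℝ ξ x : ℝ) = c := by rw [hc, real_inner_comm]
    have hc2 : ‖ξ - x‖^2 = 2 - 2 * c := by
      rw [norm_sub_sq_real, hξn, hx, hinner]; ring
    have hchalf : 1/2 ≤ c := by nlinarith [norm_nonneg (ξ - x)]
    set P : E := ξ - c • x with hP
    have hP2 : ‖P‖^2 = 1 - c^2 := by
      rw [hP, norm_sub_sq_real, real_inner_smul_right, hinner, norm_smul, hξn, hx,
        Real.norm_eq_abs]
      nlinarith [sq_abs c]
    refine ⟨P, ⟨?_, ?_⟩, ?_⟩
    · -- P ∈ closedBall 0 s'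
      rw [mem_closedBall, dist_zero_right]
      refine le_min ?_ ?_
      · nlinarith [norm_nonneg P, norm_nonneg (ξ - x)]
      · nlinarith [norm_nonneg P]
    · -- P ∈ orthogonal complement
      rw [SetLike.mem_coe, Submodule.mem_orthogonal_singleton_iff_inner_right]
      rw [hP, inner_sub_right, real_inner_smul_right, real_inner_self_eq_norm_sq, hx, ← hc]
      ring
    · -- g P = ξ
      have : (1 : ℝ) - ‖P‖^2 = c^2 := by rw [hP2]; ring
      simp only [this]
      rw [Real.sqrt_sq (by linarith)]
      rw [hP]; abel
  -- the identification map Φ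
  set b : OrthonormalBasis (Fin m) ℝ ((ℝ ∙ x)ᗮ) :=
    OrthonormalBasis.fromOrthogonalSpanSingleton m hx0 with hb
  set Φ : (Fin m → ℝ) → E :=
    fun w => ((b.repr.symm ((WithLp.equiv 2 (Fin m → ℝ)).symm w) : (ℝ ∙ x)ᗮ) : E) with hΦ
  have hΦlip : LipschitzWith cst Φ := by
    have h1 : LipschitzWith cst ((WithLp.equiv 2 (Fin m → ℝ)).symm) :=
      PiLp.lipschitzWith_toLp 2 (fun _ : Fin m => ℝ)
    have h2 : Isometry (fun y : EuclideanSpace ℝ (Fin m) => ((b.repr.symm y : (ℝ ∙ x)ᗮ) : E)) :=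
      isometry_subtype_coe.comp b.repr.symm.isometry
    have h3 := h2.lipschitz.comp h1; rw [one_mul] at h3; exact h3
  -- T ⊆ Φ '' Q
  set Q : Set (Fin m → ℝ) := closedBall 0 s' with hQ
  have hTQ : T ⊆ Φ '' Q := by
    rintro ζ ⟨hζ1, hζ2⟩
    have hζn : ‖ζ‖ ≤ s' := by simpa [dist_zero_right] using hζ1
    set y : (ℝ ∙ x)ᗮ := ⟨ζ, hζ2⟩ with hy
    refine ⟨WithLp.equiv 2 (Fin m → ℝ) (b.repr y), ?_, ?_⟩
    · rw [hQ, mem_closedBall, dist_zero_right]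
      have : dist (WithLp.equiv 2 (Fin m → ℝ) (b.repr y)) (WithLp.equiv 2 (Fin m → ℝ) 0)
          ≤ ((1 : ℝ≥0) : ℝ) * dist (b.repr y) 0 :=
        (PiLp.lipschitzWith_ofLp 2 (fun _ : Fin m => ℝ)).dist_le_mul (b.repr y) 0
      have h0 : (WithLp.equiv 2 (Fin m → ℝ)) 0 = 0 := rfl
      rw [h0, dist_zero_right, dist_zero_right] at this
      calc ‖WithLp.equiv 2 (Fin m → ℝ) (b.repr y)‖ ≤ ‖b.repr y‖ := by
            simpa using this
        _ = ‖y‖ := b.repr.norm_map y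
        _ = ‖ζ‖ := rfl
        _ ≤ s' := hζn
    · simp [hΦ, hy]
  -- put everything together
  have hd0 : (0:ℝ) ≤ (m:ℝ) := Nat.cast_nonneg m
  have hTsub : T ⊆ closedBall (0:E) (Real.sqrt 3 / 2) :=
    inter_subset_left.trans (closedBall_subset_closedBall (min_le_right _ _))
  have step1 : μH[(m:ℝ)] (sphere (0:E) 1 ∩ closedBall x s)
      ≤ (3:ℝ≥0∞) ^ (m:ℝ) * μH[(m:ℝ)] T := by
    calc μH[(m:ℝ)] (sphere (0:E) 1 ∩ closedBall x s)
        ≤ μH[(m:ℝ)] ((fun ζ => ζ + Real.sqrt (1 - ‖ζ‖^2) • x) '' T) := measure_mono hCap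
      _ ≤ (3:ℝ≥0∞) ^ (m:ℝ) * μH[(m:ℝ)] T := by
          simpa using ((g_lip x hx).mono hTsub).hausdorffMeasure_image_le hd0
  have step2 : μH[(m:ℝ)] T ≤ (cst : ℝ≥0∞) ^ (m:ℝ) * μH[(m:ℝ)] Q := by
    calc μH[(m:ℝ)] T ≤ μH[(m:ℝ)] (Φ '' Q) := measure_mono hTQ
      _ ≤ (cst : ℝ≥0∞) ^ (m:ℝ) * μH[(m:ℝ)] Q := hΦlip.hausdorffMeasure_image_le hd0 Q
  have hμpi : (μH[(m:ℝ)] : Measure (Fin m → ℝ)) = volume := by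
    simpa using hausdorffMeasure_pi_real (ι := Fin m)
  have step3 : μH[(m:ℝ)] Q ≤ ENNReal.ofReal (2 ^ m) * ENNReal.ofReal s ^ m := by
    rw [hμpi, hQ, Real.volume_pi_closedBall 0 hs'0]
    rw [← ENNReal.ofReal_pow hs.le, ← ENNReal.ofReal_mul (by positivity)]
    apply ENNReal.ofReal_le_ofReal
    simp only [Fintype.card_fin]
    calc (2 * s') ^ m ≤ (2 * s) ^ m := by
          apply pow_le_pow_left₀ (by positivity)
          have : s' ≤ s := min_le_left _ _
          linarith
      _ = 2 ^ m * s ^ m := mul_pow 2 s m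
  calc μH[((d-1:ℕ):ℝ)] (sphere (0:E) 1 ∩ closedBall x s)
      ≤ (3:ℝ≥0∞) ^ (m:ℝ) * ((cst : ℝ≥0∞) ^ (m:ℝ) * μH[(m:ℝ)] Q) := by
        exact step1.trans (mul_le_mul_right step2 _)
    _ ≤ (3:ℝ≥0∞) ^ (m:ℝ) * ((cst : ℝ≥0∞) ^ (m:ℝ) *
        (ENNReal.ofReal (2 ^ m) * ENNReal.ofReal s ^ m)) :=
        mul_le_mul_right (mul_le_mul_right step3 _) _
    _ = (3:ℝ≥0∞) ^ (m:ℝ) * (cst : ℝ≥0∞) ^ (m:ℝ) * ENNReal.ofReal (2 ^ m)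
        * ENNReal.ofReal s ^ m := by ring

private lemma unitSphereBound {d : ℕ} (hd : 1 ≤ d) :
    ∃ K : ℝ≥0∞, K ≠ ⊤ ∧
      μH[((d - 1 : ℕ) : ℝ)] (sphere (0 : EuclideanSpace ℝ (Fin d)) 1) ≤ K := by
  classical
  set E := EuclideanSpace ℝ (Fin d)
  obtain ⟨K₁, hK₁, hcap⟩ := unitCap hd
  have hcomp : IsCompact (sphere (0:E) 1) := isCompact_sphere 0 1
  obtain ⟨t, ht⟩ := hcomp.elim_finite_subcover (fun x : E => ball x 2⁻¹)
    (fun _ => isOpen_ball) (fun ξ _ => mem_iUnion.2 ⟨ξ, mem_ball_self (by norm_num)⟩)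
  refine ⟨t.card * K₁, ENNReal.mul_ne_top (ENNReal.natCast_ne_top _) hK₁, ?_⟩
  have hsub : sphere (0:E) 1 ⊆ ⋃ i ∈ t, sphere (0:E) 1 ∩ ball i 2⁻¹ := by
    intro ξ hξ
    obtain ⟨i, hi, hmem⟩ := mem_iUnion₂.1 (ht hξ)
    exact mem_iUnion₂.2 ⟨i, hi, hξ, hmem⟩
  calc μH[((d-1:ℕ):ℝ)] (sphere (0:E) 1)
      ≤ ∑ i ∈ t, μH[((d-1:ℕ):ℝ)] (sphere (0:E) 1 ∩ ball i 2⁻¹) :=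
        (measure_mono hsub).trans (measure_biUnion_finset_le t _)
    _ ≤ ∑ _i ∈ t, K₁ := by
        apply Finset.sum_le_sum
        intro i _
        by_cases hne : (sphere (0:E) 1 ∩ ball i 2⁻¹).Nonempty
        · obtain ⟨x₀, hx₀s, hx₀b⟩ := hne
          have hx₀n : ‖x₀‖ = 1 := by simpa [dist_zero_right] using hx₀s
          have hsub2 : sphere (0:E) 1 ∩ ball i 2⁻¹ ⊆ sphere (0:E) 1 ∩ closedBall x₀ 1 := by
            rintro ξ ⟨hξ1, hξ2⟩
            refine ⟨hξ1, ?_⟩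
            rw [mem_closedBall]
            have h1 : dist ξ i < 2⁻¹ := hξ2
            have h2 : dist x₀ i < 2⁻¹ := hx₀b
            calc dist ξ x₀ ≤ dist ξ i + dist i x₀ := dist_triangle _ _ _
              _ = dist ξ i + dist x₀ i := by rw [dist_comm i x₀]
              _ ≤ 1 := by linarith
          calc μH[((d-1:ℕ):ℝ)] (sphere (0:E) 1 ∩ ball i 2⁻¹)
              ≤ μH[((d-1:ℕ):ℝ)] (sphere (0:E) 1 ∩ closedBall x₀ 1) := measure_mono hsub2
            _ ≤ K₁ * ENNReal.ofReal 1 ^ (d-1:ℕ) := hcap x₀ hx₀n 1 one_pos le_rfl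
            _ = K₁ := by simp
        · rw [not_nonempty_iff_eq_empty] at hne
          simp [hne]
    _ = t.card * K₁ := by rw [Finset.sum_const, nsmul_eq_mul]

private lemma capBound {d : ℕ} (hd : 1 ≤ d) :
    ∃ K : ℝ≥0∞, K ≠ ⊤ ∧ ∀ (r : ℝ), 0 < r → ∀ η : EuclideanSpace ℝ (Fin d), ‖η‖ = r →
      ∀ s : ℝ, 0 < s →
      μH[((d - 1 : ℕ) : ℝ)] (sphere (0 : EuclideanSpace ℝ (Fin d)) r ∩ closedBall η s)
        ≤ K * ENNReal.ofReal s ^ (d - 1 : ℕ) := by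
  classical
  set E := EuclideanSpace ℝ (Fin d)
  set m := d - 1 with hm
  obtain ⟨K₁, hK₁, hcap⟩ := unitCap hd
  obtain ⟨K₂, hK₂, hsph⟩ := unitSphereBound hd
  refine ⟨K₁ + K₂, by finiteness, ?_⟩
  intro r hr η hη s hs
  have hr0 : r ≠ 0 := ne_of_gt hr
  have hd0 : (0:ℝ) ≤ (m:ℝ) := Nat.cast_nonneg m
  -- scaling
  have hsmul : ∀ A : Set E, μH[(m:ℝ)] (r • A) = (‖r‖₊ : ℝ≥0∞) ^ (m:ℝ) * μH[(m:ℝ)] A := by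
    intro A
    rw [MeasureTheory.Measure.hausdorffMeasure_smul₀ hd0 hr0 A]
    rw [ENNReal.smul_def, smul_eq_mul, ENNReal.coe_rpow_of_nonneg _ hd0]
  have hnorm : ((‖r‖₊ : ℝ≥0∞)) ^ (m:ℝ) = ENNReal.ofReal r ^ m := by
    rw [ENNReal.rpow_natCast]
    congr 1
    rw [Real.nnnorm_of_nonneg hr.le, ENNReal.ofReal, Real.toNNReal_of_nonneg hr.le]
  by_cases hsr : s ≤ r
  · -- use the rescaled unit cap
    have hsub : sphere (0:E) r ∩ closedBall η s
        ⊆ r • (sphere (0:E) 1 ∩ closedBall (r⁻¹ • η) (s / r)) := by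
      rintro ξ ⟨hξ1, hξ2⟩
      have hξn : ‖ξ‖ = r := by simpa [dist_zero_right] using hξ1
      refine ⟨r⁻¹ • ξ, ⟨?_, ?_⟩, smul_inv_smul₀ hr0 ξ⟩
      · rw [mem_sphere, dist_zero_right, norm_smul, hξn, Real.norm_eq_abs,
          abs_of_pos (inv_pos.2 hr), inv_mul_cancel₀ hr0]
      · rw [mem_closedBall, dist_eq_norm, ← smul_sub, norm_smul, Real.norm_eq_abs,
          abs_of_pos (inv_pos.2 hr)]
        rw [div_eq_inv_mul]
        have : ‖ξ - η‖ ≤ s := by simpa [dist_eq_norm] using hξ2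
        exact mul_le_mul_of_nonneg_left this (inv_pos.2 hr).le
    have hsr1 : s / r ≤ 1 := (div_le_one hr).2 hsr
    have hsr0 : 0 < s / r := div_pos hs hr
    calc μH[(m:ℝ)] (sphere (0:E) r ∩ closedBall η s)
        ≤ μH[(m:ℝ)] (r • (sphere (0:E) 1 ∩ closedBall (r⁻¹ • η) (s/r))) :=
          measure_mono hsub
      _ = ENNReal.ofReal r ^ m * μH[(m:ℝ)] (sphere (0:E) 1 ∩ closedBall (r⁻¹ • η) (s/r)) := by
          rw [hsmul, hnorm]
      _ ≤ ENNReal.ofReal r ^ m * (K₁ * ENNReal.ofReal (s/r) ^ m) := by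
          apply mul_le_mul_right
          apply hcap _ _ _ hsr0 hsr1
          rw [norm_smul, hη, Real.norm_eq_abs, abs_of_pos (inv_pos.2 hr), inv_mul_cancel₀ hr0]
      _ = K₁ * (ENNReal.ofReal r * ENNReal.ofReal (s/r)) ^ m := by
          rw [mul_pow]; ring
      _ = K₁ * ENNReal.ofReal s ^ m := by
          rw [← ENNReal.ofReal_mul hr.le, mul_div_cancel₀ s hr0]
      _ ≤ (K₁ + K₂) * ENNReal.ofReal s ^ m := by
          exact mul_le_mul_left le_self_add _
  · -- s > r : bound by the whole sphere
    push_neg at hsr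
    have hsub : sphere (0:E) r ⊆ r • (sphere (0:E) 1) := by
      intro ξ hξ1
      have hξn : ‖ξ‖ = r := by simpa [dist_zero_right] using hξ1
      refine ⟨r⁻¹ • ξ, ?_, smul_inv_smul₀ hr0 ξ⟩
      rw [mem_sphere, dist_zero_right, norm_smul, hξn, Real.norm_eq_abs,
        abs_of_pos (inv_pos.2 hr), inv_mul_cancel₀ hr0]
    calc μH[(m:ℝ)] (sphere (0:E) r ∩ closedBall η s)
        ≤ μH[(m:ℝ)] (r • (sphere (0:E) 1)) :=
          measure_mono (inter_subset_left.trans hsub)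
      _ = ENNReal.ofReal r ^ m * μH[(m:ℝ)] (sphere (0:E) 1) := by rw [hsmul, hnorm]
      _ ≤ ENNReal.ofReal s ^ m * K₂ := by
          apply mul_le_mul'
          · exact pow_le_pow_left' (ENNReal.ofReal_le_ofReal hsr.le) m
          · exact hsph
      _ ≤ (K₁ + K₂) * ENNReal.ofReal s ^ m := by
          rw [mul_comm]
          exact mul_le_mul_left le_add_self _

theorem stmt5 (d : ℕ) (hd : 1 ≤ d) (N : ℝ) (hN : (d : ℝ) - 1 < N) :
    ∃ C > 0, ∀ r : ℝ, 0 < r → ∀ η : EuclideanSpace ℝ (Fin d), ‖η‖ = r →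
      ∫ ξ in Metric.sphere (0 : EuclideanSpace ℝ (Fin d)) r,
        (1 + ‖η - ξ‖ ^ 2) ^ (-(N / 2)) ∂μH[(d : ℝ) - 1] ≤ C := by
  classical
  set m := d - 1 with hm
  have hcast : (d : ℝ) - 1 = (m : ℝ) := by
    rw [hm, Nat.cast_sub hd]; norm_num
  obtain ⟨K, hK, hcap⟩ := capBound hd
  have hmN : (m : ℝ) < N := by rw [← hcast]; exact hN
  have hN0 : 0 < N := lt_of_le_of_lt (Nat.cast_nonneg m) hmN
  set q : ℝ≥0∞ := ENNReal.ofReal ((2:ℝ) ^ ((m:ℝ) - N)) with hq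
  have hq1 : q < 1 := by
    rw [hq]
    have : (2:ℝ) ^ ((m:ℝ) - N) < 1 :=
      Real.rpow_lt_one_of_one_lt_of_neg one_lt_two (by linarith)
    calc ENNReal.ofReal ((2:ℝ) ^ ((m:ℝ) - N)) < ENNReal.ofReal 1 :=
          (ENNReal.ofReal_lt_ofReal_iff (by norm_num)).2 this
      _ = 1 := ENNReal.ofReal_one
  set Ctot : ℝ≥0∞ := K * ENNReal.ofReal ((2:ℝ) ^ N) * (1 - q)⁻¹ with hC
  have hCne : Ctot ≠ ⊤ := by
    apply ENNReal.mul_ne_top (ENNReal.mul_ne_top hK ENNReal.ofReal_ne_top)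
    rw [Ne, ENNReal.inv_eq_top]
    exact (tsub_pos_of_lt hq1).ne'
  refine ⟨Ctot.toReal + 1, by positivity, ?_⟩
  intro r hr η hη
  set f : EuclideanSpace ℝ (Fin d) → ℝ := fun ξ => (1 + ‖η - ξ‖ ^ 2) ^ (-(N / 2)) with hf
  have hf0 : ∀ ξ, 0 ≤ f ξ := fun ξ => Real.rpow_nonneg (by positivity) _
  have hfc : Continuous f := by
    apply Continuous.rpow_const
    · fun_prop
    · intro ξ; left; positivity
  set B : ℕ → ℝ≥0∞ := fun k => ENNReal.ofReal ((2:ℝ) ^ ((1 - (k:ℝ)) * N)) with hB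
  have hpt : ∀ ξ : EuclideanSpace ℝ (Fin d), ENNReal.ofReal (f ξ) ≤
      ∑' k : ℕ, (closedBall η ((2:ℝ)^k)).indicator (fun _ => B k) ξ := by
    intro ξ
    set t := ‖η - ξ‖ with htdef
    have ht0 : 0 ≤ t := norm_nonneg _
    have hmem : ∀ k : ℕ, t ≤ 2^k → ξ ∈ closedBall η ((2:ℝ)^k) := by
      intro k hk
      rw [mem_closedBall, dist_eq_norm, norm_sub_rev]
      exact hk
    by_cases ht1 : t ≤ 1
    · refine le_trans ?_ (ENNReal.le_tsum 0)
      rw [Set.indicator_of_mem (hmem 0 (by simpa using ht1))]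
      apply ENNReal.ofReal_le_ofReal
      calc f ξ ≤ 1 := Real.rpow_le_one_of_one_le_of_nonpos (by nlinarith) (by linarith)
        _ ≤ (2:ℝ) ^ ((1 - ((0:ℕ):ℝ)) * N) := by
            simp only [Nat.cast_zero, sub_zero, one_mul]
            exact Real.one_le_rpow one_le_two hN0.le
    · push_neg at ht1
      obtain ⟨n₀, hn₀⟩ := pow_unbounded_of_one_lt t (one_lt_two (α := ℝ))
      have hex : ∃ n : ℕ, t ≤ (2:ℝ)^n := ⟨n₀, hn₀.le⟩
      set n := Nat.find hex with hn
      have hnt : t ≤ (2:ℝ)^n := Nat.find_spec hex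
      have hn1 : 1 ≤ n := by
        rcases Nat.eq_zero_or_pos n with h | h
        · exfalso
          rw [h] at hnt
          simp at hnt
          linarith
        · exact h
      have hlow : (2:ℝ)^(n-1) < t := by
        have := Nat.find_min hex (show n - 1 < n by omega)
        push_neg at this
        exact this
      refine le_trans ?_ (ENNReal.le_tsum n)
      rw [Set.indicator_of_mem (hmem n hnt)]
      apply ENNReal.ofReal_le_ofReal
      have h2p : (0:ℝ) < (2:ℝ)^(n-1) := by positivity
      have ht0' : (0:ℝ) < t := by linarith
      have step : f ξ ≤ t ^ (-N) := by
        have h1 : f ξ ≤ (t^2) ^ (-(N/2)) :=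
          Real.rpow_le_rpow_of_nonpos (by positivity) (by linarith) (by linarith)
        have h2 : (t^2 : ℝ) ^ (-(N/2)) = t ^ (-N) := by
          rw [← Real.rpow_natCast t 2, ← Real.rpow_mul ht0]
          congr 1
          ring
        rw [h2] at h1
        exact h1
      have step2 : t ^ (-N) ≤ ((2:ℝ)^(n-1 : ℕ)) ^ (-N) :=
        Real.rpow_le_rpow_of_nonpos h2p hlow.le (by linarith)
      have step3 : ((2:ℝ)^(n-1:ℕ)) ^ (-N) = (2:ℝ) ^ ((1 - (n:ℝ)) * N) := by
        rw [← Real.rpow_natCast 2 (n-1), ← Real.rpow_mul (by norm_num)]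
        congr 1
        rw [Nat.cast_sub hn1]
        push_cast
        ring
      calc f ξ ≤ t ^ (-N) := step
        _ ≤ ((2:ℝ)^(n-1:ℕ)) ^ (-N) := step2
        _ = (2:ℝ) ^ ((1 - (n:ℝ)) * N) := step3
  have hL : ∫⁻ ξ in sphere (0 : EuclideanSpace ℝ (Fin d)) r,
      ENNReal.ofReal (f ξ) ∂μH[(m:ℝ)] ≤ Ctot := by
    calc ∫⁻ ξ in sphere (0 : EuclideanSpace ℝ (Fin d)) r, ENNReal.ofReal (f ξ) ∂μH[(m:ℝ)]
        ≤ ∫⁻ ξ in sphere (0 : EuclideanSpace ℝ (Fin d)) r,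
            ∑' k : ℕ, (closedBall η ((2:ℝ)^k)).indicator (fun _ => B k) ξ ∂μH[(m:ℝ)] :=
          lintegral_mono (fun ξ => hpt ξ)
      _ = ∑' k : ℕ, ∫⁻ ξ in sphere (0 : EuclideanSpace ℝ (Fin d)) r,
            (closedBall η ((2:ℝ)^k)).indicator (fun _ => B k) ξ ∂μH[(m:ℝ)] :=
          lintegral_tsum (fun k =>
            (measurable_const.indicator measurableSet_closedBall).aemeasurable)
      _ = ∑' k : ℕ, B k * μH[(m:ℝ)]
            (sphere (0 : EuclideanSpace ℝ (Fin d)) r ∩ closedBall η ((2:ℝ)^k)) := by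
          congr 1
          funext k
          rw [lintegral_indicator measurableSet_closedBall, setLIntegral_const,
            Measure.restrict_apply measurableSet_closedBall, inter_comm]
      _ ≤ ∑' k : ℕ, (K * ENNReal.ofReal ((2:ℝ) ^ N)) * q ^ k := by
          apply ENNReal.tsum_le_tsum
          intro k
          have hc := hcap r hr η hη ((2:ℝ)^k) (by positivity)
          calc B k * μH[(m:ℝ)]
                (sphere (0 : EuclideanSpace ℝ (Fin d)) r ∩ closedBall η ((2:ℝ)^k))
              ≤ B k * (K * ENNReal.ofReal ((2:ℝ)^k) ^ m) := mul_le_mul_right hc _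
            _ = K * (B k * ENNReal.ofReal ((2:ℝ)^k) ^ m) := by ring
            _ = K * ENNReal.ofReal ((2:ℝ) ^ ((1 - (k:ℝ)) * N) * ((2:ℝ)^(k:ℕ))^(m:ℕ)) := by
                rw [hB, ← ENNReal.ofReal_pow (by positivity), ← ENNReal.ofReal_mul (by positivity)]
            _ = K * ENNReal.ofReal ((2:ℝ) ^ N * ((2:ℝ) ^ ((m:ℝ) - N)) ^ (k:ℕ)) := by
                congr 2
                rw [← Real.rpow_natCast 2 k, ← Real.rpow_natCast ((2:ℝ)^((k:ℝ))) m,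
                  ← Real.rpow_mul (by norm_num : (0:ℝ) ≤ 2),
                  ← Real.rpow_natCast ((2:ℝ)^((m:ℝ)-N)) k,
                  ← Real.rpow_mul (by norm_num : (0:ℝ) ≤ 2),
                  ← Real.rpow_add (by norm_num : (0:ℝ) < 2),
                  ← Real.rpow_add (by norm_num : (0:ℝ) < 2)]
                congr 1
                ring
            _ = (K * ENNReal.ofReal ((2:ℝ) ^ N)) * q ^ k := by
                rw [ENNReal.ofReal_mul (by positivity), ENNReal.ofReal_pow (by positivity), hq]
                ring
      _ = (K * ENNReal.ofReal ((2:ℝ) ^ N)) * (1 - q)⁻¹ := by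
          rw [ENNReal.tsum_mul_left, ENNReal.tsum_geometric]
      _ = Ctot := by rw [hC]
  rw [hcast]
  rw [MeasureTheory.integral_eq_lintegral_of_nonneg_ae (ae_of_all _ hf0)
    hfc.aestronglyMeasurable]
  calc (∫⁻ ξ in sphere (0 : EuclideanSpace ℝ (Fin d)) r,
        ENNReal.ofReal (f ξ) ∂μH[(m:ℝ)]).toReal
      ≤ Ctot.toReal := ENNReal.toReal_mono hCne hL
    _ ≤ Ctot.toReal + 1 := by linarith
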